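/- Fix k ≥ 2 and x = (x₀,...,x_{k−1}) ∈ ℝ^k. Let A(v) = v^{k+1} + x_{k−1}v^{k−1} + ... + x₁v + x₀. Then x lies in the image of the standard A_k map h(v, x₂,...,x_{k−1}) = (k v^{k+1} + Σ_{i=2}^{k−1}(i−1)x_i v^i, −(k+1)v^k − Σ_{i=2}^{k−1} i x_i v^{i−1}, x₂, ..., x_{k−1}) if and only if A(v) has a real double root, i.e. there exists v ∈ ℝ with A(v) = A'(v) = 0. -/

import Mathlib

/-- `x = (x₀,…,x_{k−1})` lies in the image of the standard `A_k` map if and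
only if `A(v) = v^{k+1} + x_{k−1}v^{k−1} + ⋯ + x₁v + x₀` has a real double
root, i.e. a common real zero of `A` and `A'`. -/
theorem Ak_image_iff_double_root (k : ℕ) (hk : 2 ≤ k) (x : ℕ → ℝ) :
    (∃ v : ℝ,
        x 0 = k * v ^ (k + 1) + ∑ i ∈ Finset.Ico 2 k, ((i : ℝ) - 1) * x i * v ^ i ∧
        x 1 = -((k + 1 : ℝ) * v ^ k) - ∑ i ∈ Finset.Ico 2 k, (i : ℝ) * x i * v ^ (i - 1)) ↔
      (∃ v : ℝ,
        v ^ (k + 1) + ∑ i ∈ Finset.range k, x i * v ^ i = 0 ∧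
        deriv (fun w : ℝ => w ^ (k + 1) + ∑ i ∈ Finset.range k, x i * w ^ i) v = 0) := by
  apply exists_congr
  intro v
  -- split a range-k sum into the 0,1 terms and the Ico 2 k part
  have hsplit : ∀ f : ℕ → ℝ, ∑ i ∈ Finset.range k, f i
      = f 0 + f 1 + ∑ i ∈ Finset.Ico 2 k, f i := by
    intro f
    rw [Finset.range_eq_Ico, ← Finset.sum_Ico_consecutive _ (by norm_num : 0 ≤ 2) hk]
    congr 1
    rw [← Finset.range_eq_Ico]
    simp [Finset.sum_range_succ]
  set S : ℝ := ∑ i ∈ Finset.Ico 2 k, x i * v ^ i with hS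
  set T : ℝ := ∑ i ∈ Finset.Ico 2 k, (i : ℝ) * x i * v ^ (i - 1) with hT
  have e1 : ∑ i ∈ Finset.range k, x i * v ^ i = x 0 + x 1 * v + S := by
    rw [hsplit fun i => x i * v ^ i]
    norm_num
    exact hS.symm
  have e2 : ∑ i ∈ Finset.range k, x i * ((i : ℝ) * v ^ (i - 1)) = x 1 + T := by
    rw [hsplit fun i => x i * ((i : ℝ) * v ^ (i - 1))]
    have : ∑ i ∈ Finset.Ico 2 k, x i * ((i : ℝ) * v ^ (i - 1)) = T := by
      rw [hT]
      exact Finset.sum_congr rfl fun i _ => by ring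
    rw [this]
    norm_num
  have hder : deriv (fun w : ℝ => w ^ (k + 1) + ∑ i ∈ Finset.range k, x i * w ^ i) v
      = ((k : ℝ) + 1) * v ^ k + (x 1 + T) := by
    have h1 : HasDerivAt (fun w : ℝ => w ^ (k + 1) + ∑ i ∈ Finset.range k, x i * w ^ i)
        (((k + 1 : ℕ) : ℝ) * v ^ (k + 1 - 1)
          + ∑ i ∈ Finset.range k, x i * ((i : ℝ) * v ^ (i - 1))) v := by
      exact (hasDerivAt_pow (k + 1) v).add
        (HasDerivAt.fun_sum fun i _ => (hasDerivAt_pow i v).const_mul (x i))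
    rw [h1.deriv, e2]
    push_cast
    norm_num
  have hL1 : ∑ i ∈ Finset.Ico 2 k, ((i : ℝ) - 1) * x i * v ^ i = v * T - S := by
    rw [hT, hS, Finset.mul_sum, ← Finset.sum_sub_distrib]
    apply Finset.sum_congr rfl
    intro i hi
    obtain ⟨h2, _⟩ := Finset.mem_Ico.mp hi
    have hv : v ^ i = v ^ (i - 1) * v := by
      conv_lhs => rw [show i = (i - 1) + 1 from (Nat.succ_pred_eq_of_pos (by omega)).symm]
      rw [pow_succ]
    rw [hv]; ring
  rw [hL1, e1, hder]
  constructor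
  · rintro ⟨h1, h2⟩
    constructor
    · linear_combination h1 + v * h2
    · linear_combination h2
  · rintro ⟨h1, h2⟩
    constructor
    · linear_combination h1 - v * h2
    · linear_combination h2
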